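/- arXiv:2205.07296 — 2 statements merged into one kernel-verified Lean document; each statement's English description precedes it below -/
import Mathlib

section
/- There is an absolute constant C > 0 with the following property. Let G be an abelian group and A ⊆ G a finite set with dim(A) ≥ 2. Set k = ⌈dim(A)·log dim(A)⌉ and d = dim_k(A), and assume d ≥ 2. Then |nA| ≥ exp(C⁻¹·d·log d), where n = ⌈d²·log d⌉. -/
open Finset Pointwise

universe u

/-- A finset `Λ` in an abelian group is `k`-dissociated if every integer relation
`∑ ε_λ • λ = 0` with `|ε_λ| ≤ k` forces all `ε_λ = 0`. -/
def IsKDissociated {G : Type*} [AddCommGroup G] (k : ℕ) (Λ : Finset G) : Prop :=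
  ∀ ε : G → ℤ, (∀ x ∈ Λ, |ε x| ≤ (k : ℤ)) → (∑ x ∈ Λ, ε x • x) = 0 → ∀ x ∈ Λ, ε x = 0

/-- `addDim k A` is the maximal size of a `k`-dissociated subset of `A`. -/
noncomputable def addDim {G : Type*} [AddCommGroup G] (k : ℕ) (A : Finset G) : ℕ :=
  sSup {n : ℕ | ∃ Λ : Finset G, Λ ⊆ A ∧ Λ.card = n ∧ IsKDissociated k Λ}

/-- `nFold A n` is the `n`-fold sumset `A + A + ⋯ + A` (`n` summands). -/
def nFold {G : Type*} [AddCommGroup G] [DecidableEq G] (A : Finset G) : ℕ → Finset G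
  | 0 => {0}
  | n + 1 => nFold A n + A

section Aux

variable {G : Type*} [AddCommGroup G] [DecidableEq G]

lemma nFold_add (A : Finset G) (a b : ℕ) : nFold A (a + b) = nFold A a + nFold A b := by
  induction b with
  | zero => simp [nFold, Finset.add_singleton]
  | succ b ih => rw [← Nat.add_assoc]; simp only [nFold]; rw [ih, add_assoc]

lemma nFold_nonempty {A : Finset G} (hA : A.Nonempty) (n : ℕ) : (nFold A n).Nonempty := by
  induction n with
  | zero => exact ⟨0, by simp [nFold]⟩
  | succ n ih => exact ih.add hA

lemma smul_mem_nFold {A : Finset G} {a : G} (ha : a ∈ A) (c : ℕ) : c • a ∈ nFold A c := by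
  induction c with
  | zero => simp [nFold]
  | succ c ih =>
    have : (c + 1) • a = c • a + a := by rw [add_smul, one_smul]
    rw [this]
    exact Finset.add_mem_add ih ha

lemma sum_mem_nFold {A Λ : Finset G} (hΛ : Λ ⊆ A) (c : G → ℕ) :
    (∑ x ∈ Λ, c x • x) ∈ nFold A (∑ x ∈ Λ, c x) := by
  induction Λ using Finset.induction_on with
  | empty => simp [nFold]
  | @insert a s hx ih =>
    rw [Finset.sum_insert hx, Finset.sum_insert hx, nFold_add]
    exact Finset.add_mem_add (smul_mem_nFold (hΛ (Finset.mem_insert_self a s)) (c a))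
      (ih fun y hy => hΛ (Finset.mem_insert_of_mem hy))

lemma exp_small {x : ℝ} (hx : x ≤ 1/20) : Real.exp x ≤ 3/2 := by
  have h1 : Real.exp x ≤ Real.exp (1/20) := Real.exp_le_exp.mpr hx
  refine h1.trans ?_
  by_contra h
  push_neg at h
  have h2 : Real.exp ((20:ℕ) * (1/20 : ℝ)) = Real.exp (1/20) ^ 20 := Real.exp_nat_mul _ 20
  have h3 : ((20:ℕ) : ℝ) * (1/20 : ℝ) = 1 := by norm_num
  rw [h3] at h2
  have h4 : (3/2:ℝ)^20 < Real.exp (1/20) ^ 20 :=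
    pow_lt_pow_left₀ h (by norm_num) (by norm_num)
  rw [← h2] at h4
  have h5 := Real.exp_one_lt_d9
  norm_num at h4 h5
  linarith

lemma logb_three_le : Real.logb 2 3 ≤ 8/5 := by
  rw [Real.logb_le_iff_le_rpow one_lt_two (by norm_num)]
  by_contra h
  push_neg at h
  have h0 : (0:ℝ) ≤ (2:ℝ) ^ ((8:ℝ)/5) := (Real.rpow_pos_of_pos two_pos _).le
  have h4 : ((2:ℝ) ^ ((8:ℝ)/5)) ^ (5:ℕ) < 3 ^ (5:ℕ) := pow_lt_pow_left₀ h h0 (by norm_num)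
  rw [← Real.rpow_natCast ((2:ℝ) ^ ((8:ℝ)/5)) 5, ← Real.rpow_mul (by norm_num)] at h4
  norm_num at h4

lemma one_le_logb {d : ℕ} (hd : 2 ≤ d) : 1 ≤ Real.logb 2 d := by
  have h : Real.logb 2 2 ≤ Real.logb 2 d := by
    apply Real.logb_le_logb_of_le one_lt_two (by norm_num)
    exact_mod_cast hd
  rwa [Real.logb_self_eq_one one_lt_two] at h

lemma logb_le_sub_one {d : ℕ} (hd : 2 ≤ d) : Real.logb 2 d ≤ (d:ℝ) - 1 := by
  have hd0 : (0:ℝ) < d := by positivity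
  rw [Real.logb_le_iff_le_rpow one_lt_two hd0]
  have h1 : d ≤ 2^(d-1) := by have h := Nat.lt_two_pow_self (n := d - 1); omega
  have h2 : ((d:ℝ)) ≤ ((2:ℝ))^((d-1 : ℕ)) := by exact_mod_cast h1
  calc (d:ℝ) ≤ (2:ℝ)^((d-1:ℕ)) := h2
  _ = (2:ℝ) ^ (((d-1:ℕ):ℝ)) := (Real.rpow_natCast 2 (d-1)).symm
  _ = (2:ℝ) ^ ((d:ℝ) - 1) := by rw [Nat.cast_sub (by omega)]; norm_num

lemma key (d : ℕ) (hd : 2 ≤ d) :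
    Real.exp ((100:ℝ)⁻¹ * d * Real.logb 2 d) * ((d:ℝ)^2 * Real.logb 2 d + 2)
      ≤ ((d:ℝ)+1)^d := by
  have hL1 : 1 ≤ Real.logb 2 d := one_le_logb hd
  rcases Nat.lt_or_ge d 4 with h4 | h4
  · interval_cases d
    · have h2 : Real.logb 2 (2:ℕ) = 1 := by norm_num [Real.logb_self_eq_one one_lt_two]
      rw [h2]
      have he := exp_small (x := (100:ℝ)⁻¹ * (2:ℕ) * 1) (by push_cast; norm_num)
      push_cast
      push_cast at he
      nlinarith
    · have h3 : Real.logb 2 (3:ℕ) ≤ 8/5 := by exact_mod_cast logb_three_le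
      have h3' : (1:ℝ) ≤ Real.logb 2 (3:ℕ) := hL1
      have he := exp_small (x := (100:ℝ)⁻¹ * (3:ℕ) * Real.logb 2 (3:ℕ))
        (by push_cast; nlinarith)
      have hexp_pos : 0 < Real.exp ((100:ℝ)⁻¹ * (3:ℕ) * Real.logb 2 (3:ℕ)) := Real.exp_pos _
      push_cast at he hexp_pos h3 h3' ⊢
      nlinarith
  · set L := Real.logb 2 d with hLdef
    have hd0 : (0:ℝ) < d := by positivity
    have hlogd : 0 < Real.log d := Real.log_pos (by exact_mod_cast hd)
    have hlog2 := Real.log_two_gt_d9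
    have hLdf : L = Real.log d / Real.log 2 := (Real.log_div_log).symm
    have hd4 : (4:ℝ) ≤ d := by exact_mod_cast h4
    have harg : (100:ℝ)⁻¹ * d * L ≤ ((d:ℝ) - 3) * Real.log d := by
      have hlog2p : (0:ℝ) < Real.log 2 := by linarith
      have hq : L * Real.log 2 = Real.log d := by
        rw [hLdf]; field_simp
      have hQ0 : (0:ℝ) ≤ L := by linarith
      have hdd : (d:ℝ) ≤ ((d:ℝ) - 3) * (100 * Real.log 2) := by nlinarith
      have hq2 : ((d:ℝ)-3) * (L * Real.log 2) = ((d:ℝ)-3) * Real.log d := by rw [hq]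
      nlinarith [mul_le_mul_of_nonneg_right hdd hQ0, hq2]
    have hE : Real.exp ((100:ℝ)⁻¹ * d * L) ≤ (d:ℝ) ^ (d - 3) := by
      have h1 : Real.exp ((100:ℝ)⁻¹ * d * L) ≤ Real.exp (((d:ℝ) - 3) * Real.log d) :=
        Real.exp_le_exp.mpr harg
      have hc : ((d - 3 : ℕ) : ℝ) = (d:ℝ) - 3 := by
        rw [Nat.cast_sub (by omega)]; norm_num
      have h2 : Real.exp (((d:ℝ) - 3) * Real.log d) = (d:ℝ) ^ (d - 3) := by
        rw [← hc, Real.exp_nat_mul, Real.exp_log hd0]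
      rwa [h2] at h1
    have hD : (d:ℝ)^2 * L + 2 ≤ (d:ℝ)^3 := by
      have := logb_le_sub_one hd
      nlinarith
    have hmain : Real.exp ((100:ℝ)⁻¹ * d * L) * ((d:ℝ)^2 * L + 2) ≤ (d:ℝ)^(d-3) * (d:ℝ)^3 := by
      apply mul_le_mul hE hD (by positivity) (by positivity)
    calc Real.exp ((100:ℝ)⁻¹ * d * L) * ((d:ℝ)^2 * L + 2) ≤ (d:ℝ)^(d-3) * (d:ℝ)^3 := hmain
    _ = (d:ℝ)^d := by rw [← pow_add]; congr 1; omega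
    _ ≤ ((d:ℝ)+1)^d := pow_le_pow_left₀ (by positivity) (by linarith) d

end Aux

theorem stmt2 :
    ∃ C : ℝ, 0 < C ∧
      ∀ (G : Type u) [AddCommGroup G] [DecidableEq G] (A : Finset G),
        2 ≤ addDim 1 A →
        ∀ k d n : ℕ,
          k = ⌈(addDim 1 A : ℝ) * Real.logb 2 (addDim 1 A)⌉₊ →
          d = addDim k A →
          2 ≤ d →
          n = ⌈(d : ℝ) ^ 2 * Real.logb 2 d⌉₊ →
          ((nFold A n).card : ℝ) ≥ Real.exp (C⁻¹ * d * Real.logb 2 d) := by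
  classical
  refine ⟨100, by norm_num, ?_⟩
  intro G _ _ A hD2 k d n hk hd hd2 hn
  set D := addDim 1 A with hDdef
  have hD2R : (2:ℝ) ≤ (D:ℝ) := by exact_mod_cast hD2
  have hLD1 : 1 ≤ Real.logb 2 D := one_le_logb hD2
  have hk1 : 1 ≤ k := by
    rw [hk]
    have h : (0:ℝ) < (D:ℝ) * Real.logb 2 D := by nlinarith
    exact Nat.ceil_pos.mpr h
  -- extract a k-dissociated set of size d
  have hS : ∃ Λ : Finset G, Λ ⊆ A ∧ Λ.card = d ∧ IsKDissociated k Λ := by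
    have hne : ({m : ℕ | ∃ Λ : Finset G, Λ ⊆ A ∧ Λ.card = m ∧ IsKDissociated k Λ}).Nonempty :=
      ⟨0, ∅, by simp, by simp, by intro ε _ _ x hx; simp at hx⟩
    have hbdd : BddAbove {m : ℕ | ∃ Λ : Finset G, Λ ⊆ A ∧ Λ.card = m ∧ IsKDissociated k Λ} := by
      refine ⟨A.card, ?_⟩
      rintro m ⟨Λ, hΛ, hcard, -⟩
      exact hcard ▸ Finset.card_le_card hΛ
    have hmem := Nat.sSup_mem hne hbdd
    rw [hd]
    exact hmem
  obtain ⟨Λ, hΛA, hΛcard, hΛdiss⟩ := hS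
  -- d ≤ D
  have hΛ1 : IsKDissociated 1 Λ := by
    intro ε hε hsum x hx
    refine hΛdiss ε (fun y hy => (hε y hy).trans ?_) hsum x hx
    exact_mod_cast hk1
  have hdD : d ≤ D := by
    have hbdd1 : BddAbove {m : ℕ | ∃ Λ' : Finset G,
        Λ' ⊆ A ∧ Λ'.card = m ∧ IsKDissociated 1 Λ'} := by
      refine ⟨A.card, ?_⟩
      rintro m ⟨Λ', h1, h2, -⟩
      exact h2 ▸ Finset.card_le_card h1
    have hmem : d ∈ {m : ℕ | ∃ Λ' : Finset G,
        Λ' ⊆ A ∧ Λ'.card = m ∧ IsKDissociated 1 Λ'} := ⟨Λ, hΛA, hΛcard, hΛ1⟩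
    exact le_csSup hbdd1 hmem
  -- numeric setup
  set L := Real.logb 2 d with hLdef
  have hL1 : 1 ≤ L := one_le_logb hd2
  have hd2R : (2:ℝ) ≤ (d:ℝ) := by exact_mod_cast hd2
  have hnlow : d^2 ≤ n := by
    have h1 : ((d^2 : ℕ):ℝ) ≤ (d:ℝ)^2 * L := by push_cast; nlinarith
    have h2 := Nat.le_ceil ((d:ℝ)^2 * Real.logb 2 d)
    rw [hn]
    exact_mod_cast h1.trans h2
  set m := n / d with hmdef
  have hm_ge : d ≤ m := by
    rw [hmdef, Nat.le_div_iff_mul_le (by omega)]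
    calc d * d = d^2 := (sq d).symm
    _ ≤ n := hnlow
  have hmd : m * d ≤ n := Nat.div_mul_le_self n d
  have hnub : (n:ℝ) < (d:ℝ)^2 * L + 1 := by
    rw [hn]
    exact Nat.ceil_lt_add_one (by positivity)
  have hdLk : (d:ℝ) * L ≤ (k:ℝ) := by
    have h1 : (d:ℝ) * L ≤ (D:ℝ) * Real.logb 2 D := by
      apply mul_le_mul (by exact_mod_cast hdD) ?_ (by linarith) (by linarith)
      exact Real.logb_le_logb_of_le one_lt_two (by positivity) (by exact_mod_cast hdD)
    have h2 := Nat.le_ceil ((D:ℝ) * Real.logb 2 D)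
    rw [hk]
    exact h1.trans h2
  have hmk : m ≤ k := by
    have h2 : ((m * d : ℕ):ℝ) ≤ (n:ℝ) := by exact_mod_cast hmd
    have h3 : ((m * d : ℕ):ℝ) < ((d * k + 1 : ℕ):ℝ) := by
      push_cast
      push_cast at h2
      nlinarith
    have h4 : m * d < d * k + 1 := by exact_mod_cast h3
    have h5 : m * d ≤ k * d := by rw [Nat.mul_comm k d]; omega
    exact Nat.le_of_mul_le_mul_right h5 (by omega)
  -- the counting argument
  have hcardT : Fintype.card {x // x ∈ Λ} = d := by rw [Fintype.card_coe, hΛcard]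
  set P := (m+1)^d with hPdef
  set q := (P - 1) / (m*d+1) with hqdef
  have hP1 : 1 ≤ P := Nat.one_le_iff_ne_zero.mpr (pow_ne_zero _ (by omega))
  set F : ({x // x ∈ Λ} → Fin (m+1)) → ℕ := fun ε => ∑ x : {x // x ∈ Λ}, (ε x : ℕ) with hFdef
  have hmaps : ∀ ε ∈ (Finset.univ : Finset ({x // x ∈ Λ} → Fin (m+1))),
      F ε ∈ Finset.range (m*d+1) := by
    intro ε _
    rw [Finset.mem_range, Nat.lt_succ_iff]
    calc F ε ≤ ∑ _x : {x // x ∈ Λ}, m :=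
          Finset.sum_le_sum fun x _ => Nat.lt_succ_iff.mp (ε x).isLt
    _ = d * m := by rw [Finset.sum_const, Finset.card_univ, hcardT, smul_eq_mul]
    _ = m * d := Nat.mul_comm d m
  have hcards : (Finset.univ : Finset ({x // x ∈ Λ} → Fin (m+1))).card = P := by
    rw [Finset.card_univ, Fintype.card_fun, Fintype.card_fin, hcardT]
  have hlt : (Finset.range (m*d+1)).card * q <
      (Finset.univ : Finset ({x // x ∈ Λ} → Fin (m+1))).card := by
    rw [Finset.card_range, hcards]
    have h1 : q * (m*d+1) ≤ P - 1 := by rw [hqdef]; exact Nat.div_mul_le_self _ _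
    calc (m*d+1) * q = q * (m*d+1) := Nat.mul_comm _ _
    _ ≤ P - 1 := h1
    _ < P := by omega
  obtain ⟨s0, hs0, hfib⟩ := Finset.exists_lt_card_fiber_of_mul_lt_card_of_maps_to hmaps hlt
  have hq_up : P ≤ (q + 1) * (m*d+1) := by
    have e1 := Nat.div_add_mod (P-1) (m*d+1)
    have e2 : (P-1) % (m*d+1) < m*d+1 := Nat.mod_lt _ (by omega)
    calc P = (P-1) + 1 := by omega
    _ = (m*d+1) * ((P-1)/(m*d+1)) + (P-1)%(m*d+1) + 1 := by rw [e1]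
    _ = (m*d+1) * q + (P-1)%(m*d+1) + 1 := by rw [hqdef]
    _ ≤ (m*d+1) * q + (m*d+1) := by omega
    _ = (q+1) * (m*d+1) := by ring
  -- injectivity
  set g : ({x // x ∈ Λ} → Fin (m+1)) → G := fun ε => ∑ x : {x // x ∈ Λ}, (ε x : ℕ) • (x : G)
    with hgdef
  have hg_inj : Function.Injective g := by
    intro ε ε' hgε
    set c : G → ℤ := fun y => if h : y ∈ Λ then ((ε ⟨y, h⟩ : ℕ) : ℤ) - ((ε' ⟨y, h⟩ : ℕ) : ℤ)
      else 0 with hcdef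
    have hcsum : ∑ y ∈ Λ, c y • y = 0 := by
      rw [← Finset.sum_attach Λ (fun y => c y • y)]
      have heq : ∀ x ∈ Λ.attach, c (x:G) • (x:G)
          = (ε x : ℕ) • (x:G) - (ε' x : ℕ) • (x:G) := by
        intro x _
        have hx2 : (x:G) ∈ Λ := x.2
        rw [hcdef]
        simp only [hx2, dif_pos, Subtype.coe_eta]
        rw [sub_smul]
        norm_num
      rw [Finset.sum_congr rfl heq, Finset.sum_sub_distrib]
      have hgg : (∑ x ∈ Λ.attach, (ε x : ℕ) • (x:G)) = ∑ x ∈ Λ.attach, (ε' x : ℕ) • (x:G) := by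
        rw [← Finset.univ_eq_attach]
        exact hgε
      rw [hgg, sub_self]
    have hbound : ∀ y ∈ Λ, |c y| ≤ (k:ℤ) := by
      intro y hy
      rw [hcdef]
      simp only [hy, dif_pos]
      have h1 : (ε ⟨y, hy⟩ : ℕ) ≤ m := Nat.lt_succ_iff.mp (ε ⟨y, hy⟩).isLt
      have h2 : (ε' ⟨y, hy⟩ : ℕ) ≤ m := Nat.lt_succ_iff.mp (ε' ⟨y, hy⟩).isLt
      rw [abs_le]
      constructor <;> [skip; skip] <;> omega
    have hzero := hΛdiss c hbound hcsum
    funext x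
    have hx := hzero (x:G) x.2
    rw [hcdef] at hx
    simp only [x.2, dif_pos, Subtype.coe_eta] at hx
    have : (ε x : ℕ) = (ε' x : ℕ) := by omega
    exact Fin.ext this
  -- the fiber maps into nFold A s0
  have himg : (Finset.univ.filter fun ε => F ε = s0).image g ⊆ nFold A s0 := by
    intro y hy
    rw [Finset.mem_image] at hy
    obtain ⟨ε, hε, rfl⟩ := hy
    rw [Finset.mem_filter] at hε
    set c : G → ℕ := fun y => if h : y ∈ Λ then (ε ⟨y, h⟩ : ℕ) else 0 with hcdef
    have h1 : g ε = ∑ y ∈ Λ, c y • y := by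
      rw [← Finset.sum_attach Λ (fun y => c y • y), hgdef]
      simp only
      rw [Finset.univ_eq_attach]
      refine Finset.sum_congr rfl fun x _ => ?_
      rw [hcdef]
      simp only [x.2, dif_pos, Subtype.coe_eta]
    have h2 : (∑ y ∈ Λ, c y) = s0 := by
      rw [← Finset.sum_attach Λ c, ← hε.2, hFdef]
      simp only
      rw [Finset.univ_eq_attach]
      refine Finset.sum_congr rfl fun x _ => ?_
      rw [hcdef]
      simp only [x.2, dif_pos, Subtype.coe_eta]
    rw [h1, ← h2]
    exact sum_mem_nFold hΛA c
  have hcard1 : q + 1 ≤ (nFold A s0).card := by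
    have h1 : q + 1 ≤ (Finset.univ.filter fun ε => F ε = s0).card := hfib
    have h2 : (Finset.univ.filter fun ε => F ε = s0).card
        = ((Finset.univ.filter fun ε => F ε = s0).image g).card :=
      (Finset.card_image_of_injective _ hg_inj).symm
    rw [h2] at h1
    exact h1.trans (Finset.card_le_card himg)
  -- monotonicity in the number of summands
  have hs0n : s0 ≤ n := by
    rw [Finset.mem_range] at hs0
    omega
  have hAne : A.Nonempty := by
    have : Λ.Nonempty := Finset.card_pos.mp (by omega)
    obtain ⟨x0, hx0⟩ := this
    exact ⟨x0, hΛA hx0⟩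
  have hcard2 : (nFold A s0).card ≤ (nFold A n).card := by
    have heq : nFold A n = nFold A s0 + nFold A (n - s0) := by
      rw [← nFold_add]; congr 1; omega
    rw [heq]
    exact Finset.card_le_card_add_right (nFold_nonempty hAne _)
  -- final real computation
  have hfinal : ((q:ℝ)+1) ≤ ((nFold A n).card : ℝ) := by
    have := hcard1.trans hcard2
    exact_mod_cast this
  have hden_pos : (0:ℝ) < (m:ℝ)*(d:ℝ)+1 := by positivity
  have hPq : ((m:ℝ)+1)^d ≤ ((q:ℝ)+1) * ((m:ℝ)*(d:ℝ)+1) := by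
    have := hq_up
    push_cast at this ⊢
    exact_mod_cast this
  have hkey := key d hd2
  have h_md_le : (m:ℝ)*(d:ℝ) + 1 ≤ (d:ℝ)^2*L + 2 := by
    have h1 : ((m*d : ℕ):ℝ) ≤ (n:ℝ) := by exact_mod_cast hmd
    push_cast at h1
    linarith
  have h_pow : ((d:ℝ)+1)^d ≤ ((m:ℝ)+1)^d := by
    apply pow_le_pow_left₀ (by positivity)
    have : (d:ℝ) ≤ (m:ℝ) := by exact_mod_cast hm_ge
    linarith
  set E := Real.exp ((100:ℝ)⁻¹ * d * L) with hEdef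
  have hE0 : 0 ≤ E := (Real.exp_pos _).le
  have hchain : E * ((m:ℝ)*(d:ℝ)+1) ≤ ((q:ℝ)+1) * ((m:ℝ)*(d:ℝ)+1) := by
    calc E * ((m:ℝ)*(d:ℝ)+1) ≤ E * ((d:ℝ)^2*L + 2) := by
          apply mul_le_mul_of_nonneg_left h_md_le hE0
    _ ≤ ((d:ℝ)+1)^d := hkey
    _ ≤ ((m:ℝ)+1)^d := h_pow
    _ ≤ ((q:ℝ)+1) * ((m:ℝ)*(d:ℝ)+1) := hPq
  have hEq : E ≤ (q:ℝ)+1 := le_of_mul_le_mul_right hchain hden_pos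
  rw [ge_iff_le]
  calc Real.exp ((100:ℝ)⁻¹ * d * Real.logb 2 d) = E := rfl
  _ ≤ (q:ℝ)+1 := hEq
  _ ≤ ((nFold A n).card : ℝ) := hfinal
end

section
/- There exist absolute constants c > 0 and C > 0 with the following property. Let G be an abelian group, A, Z ⊆ G finite nonempty sets, k and m positive integers, and K ≥ 1 a real number. Suppose that |m([k]·A) + Z| ≤ K·|Z|, that m ≤ dim_k(A)/2, that m ≤ c·log|Z|, and that log|Z| ≤ dim_k(A). Then k·dim_k(A) ≤ C·K^{1/m}·log|Z|. -/
open Finset Pointwise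

universe u

/-- `dilSet k A = {j • a : j ∈ {1,…,k}, a ∈ A}`, where `j • a` is the `j`-fold sum of `a`. -/
def dilSet {G : Type*} [AddCommGroup G] [DecidableEq G] (k : ℕ) (A : Finset G) : Finset G :=
  ((Finset.Icc 1 k) ×ˢ A).image (fun p => p.1 • p.2)

section Aux

variable {G : Type*} [AddCommGroup G] [DecidableEq G]

lemma nFold_eq_nsmul (A : Finset G) : ∀ n : ℕ, nFold A n = n • A
  | 0 => by
      rw [zero_smul]
      rfl
  | n + 1 => by
      rw [nFold, nFold_eq_nsmul A n, ← succ_nsmul]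

lemma nFold_mono {A B : Finset G} (h : A ⊆ B) : ∀ n : ℕ, nFold A n ⊆ nFold B n
  | 0 => by rfl
  | n + 1 => by
      rw [nFold, nFold]
      exact Finset.add_subset_add (nFold_mono h n) h

lemma sum_mem_nFold_s4 (S : Finset G) : ∀ (n : ℕ) (g : Fin n → G), (∀ i, g i ∈ S) →
    (∑ i, g i) ∈ nFold S n
  | 0, g, _ => by simp [nFold]
  | n + 1, g, hg => by
      rw [Fin.sum_univ_castSucc, nFold]
      exact Finset.add_mem_add (sum_mem_nFold_s4 S n _ fun i => hg _) (hg _)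

lemma dilSet_mono {k : ℕ} {A B : Finset G} (h : A ⊆ B) : dilSet k A ⊆ dilSet k B := by
  apply Finset.image_subset_image
  exact Finset.product_subset_product (Finset.Subset.refl _) h

/-- The key counting lemma: a `k`-dissociated set `Λ` of size `d` produces at least
`(d/n * k)^n` distinct elements in the `n`-fold sumset of `[k]·Λ`. -/
lemma counting (k : ℕ) (hk : 1 ≤ k) (Λ : Finset G) (hdiss : IsKDissociated k Λ)
    (n : ℕ) (hn : 1 ≤ n) (hnd : n ≤ Λ.card) :
    (Λ.card / n * k) ^ n ≤ (nFold (dilSet k Λ) n).card := by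
  classical
  set d := Λ.card with hd
  set s := d / n with hs
  have hn0 : 0 < n := hn
  have hs1 : 1 ≤ s := (Nat.one_le_div_iff hn0).mpr hnd
  have hns : n * s ≤ d := by rw [hs, mul_comm]; exact Nat.div_mul_le_self d n
  let e : Fin d ≃ {x // x ∈ Λ} := Λ.equivFin.symm
  have hidx : ∀ (i : Fin n) (r : Fin s), (i : ℕ) * s + (r : ℕ) < d := by
    intro i r
    have h1 : (i : ℕ) * s + (r : ℕ) < ((i : ℕ) + 1) * s := by
      have hr := r.isLt
      calc (i : ℕ) * s + (r : ℕ) < (i : ℕ) * s + s := by omega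
        _ = ((i : ℕ) + 1) * s := by ring
    have h2 : ((i : ℕ) + 1) * s ≤ n * s := Nat.mul_le_mul_right s i.isLt
    omega
  let idx : Fin n → Fin s → Fin d := fun i r => ⟨(i : ℕ) * s + (r : ℕ), hidx i r⟩
  have idx_inj : ∀ (i i' : Fin n) (r r' : Fin s), idx i r = idx i' r' → i = i' ∧ r = r' := by
    intro i i' r r' h
    have h' : (i : ℕ) * s + (r : ℕ) = (i' : ℕ) * s + (r' : ℕ) := congrArg Fin.val h
    have hval : ∀ (a : Fin n) (b : Fin s), ((a : ℕ) * s + (b : ℕ)) / s = (a : ℕ) := by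
      intro a b
      rw [mul_comm, Nat.mul_add_div (by omega), Nat.div_eq_of_lt b.isLt, add_zero]
    have hi : (i : ℕ) = (i' : ℕ) := by
      have e1 := hval i r
      rw [h'] at e1
      have e2 := hval i' r'
      omega
    have hr : (r : ℕ) = (r' : ℕ) := by
      have hii : (i : ℕ) * s = (i' : ℕ) * s := by rw [hi]
      omega
    exact ⟨Fin.ext hi, Fin.ext hr⟩
  let φ : (Fin n → Fin s × Fin k) → G := fun f => ∑ i : Fin n, ((f i).2.val + 1) • ((e (idx i (f i).1)) : G)
  let cf : (Fin n → Fin s × Fin k) → G → ℤ := fun f x =>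
    ∑ i : Fin n, if ((e (idx i (f i).1)) : G) = x then (((f i).2.val + 1 : ℕ) : ℤ) else 0
  have hφ_def : ∀ f : Fin n → Fin s × Fin k, φ f = ∑ i : Fin n, ((f i).2.val + 1) • ((e (idx i (f i).1)) : G) :=
    fun _ => rfl
  have hcf_def : ∀ (f : Fin n → Fin s × Fin k) (x : G), cf f x =
      ∑ i : Fin n, if ((e (idx i (f i).1)) : G) = x then (((f i).2.val + 1 : ℕ) : ℤ) else 0 :=
    fun _ _ => rfl
  have huniq : ∀ (f : Fin n → Fin s × Fin k) (i i' : Fin n),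
      ((e (idx i (f i).1)) : G) = ((e (idx i' (f i').1)) : G) → i = i' := by
    intro f i i' h
    have h2 : idx i (f i).1 = idx i' (f i').1 := e.injective (Subtype.coe_injective h)
    exact (idx_inj _ _ _ _ h2).1
  have hcf_at : ∀ (f : Fin n → Fin s × Fin k) (i : Fin n),
      cf f ((e (idx i (f i).1)) : G) = (((f i).2.val + 1 : ℕ) : ℤ) := by
    intro f i
    rw [hcf_def, Finset.sum_eq_single i]
    · rw [if_pos rfl]
    · intro b _ hb
      rw [if_neg]
      intro hEq
      exact hb (huniq f b i hEq)
    · intro h; exact absurd (Finset.mem_univ i) h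
  have hcf_nonneg : ∀ (f : Fin n → Fin s × Fin k) (x : G), 0 ≤ cf f x := by
    intro f x
    rw [hcf_def]
    apply Finset.sum_nonneg
    intro i _
    split
    · positivity
    · rfl
  have hcf_le : ∀ (f : Fin n → Fin s × Fin k) (x : G), cf f x ≤ (k : ℤ) := by
    intro f x
    rw [hcf_def]
    by_cases hex : ∃ i : Fin n, ((e (idx i (f i).1)) : G) = x
    · obtain ⟨i₀, hi₀⟩ := hex
      rw [Finset.sum_eq_single i₀]
      · rw [if_pos hi₀]
        have := (f i₀).2.isLt
        exact_mod_cast Nat.succ_le_of_lt this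
      · intro b _ hb
        rw [if_neg]
        intro hEq
        exact hb (huniq f b i₀ (hEq.trans hi₀.symm))
      · intro h; exact absurd (Finset.mem_univ i₀) h
    · rw [Finset.sum_eq_zero]
      · positivity
      · intro i _
        rw [if_neg]
        intro hEq
        exact hex ⟨i, hEq⟩
  have hsum : ∀ f : Fin n → Fin s × Fin k, ∑ x ∈ Λ, cf f x • x = φ f := by
    intro f
    have h1 : ∑ x ∈ Λ, cf f x • x = ∑ x ∈ Λ, ∑ i : Fin n,
        (if ((e (idx i (f i).1)) : G) = x then (((f i).2.val + 1 : ℕ) : ℤ) else 0) • x := by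
      refine Finset.sum_congr rfl fun x _ => ?_
      rw [hcf_def, Finset.sum_smul]
    rw [h1, Finset.sum_comm, hφ_def]
    refine Finset.sum_congr rfl fun i _ => ?_
    have h2 : ∀ x ∈ Λ,
        (if ((e (idx i (f i).1)) : G) = x then (((f i).2.val + 1 : ℕ) : ℤ) else 0) • x
        = if ((e (idx i (f i).1)) : G) = x then (((f i).2.val + 1 : ℕ) : ℤ) • x else 0 := by
      intro x _
      split <;> simp
    rw [Finset.sum_congr rfl h2, Finset.sum_ite_eq]
    have hmemx : ((e (idx i (f i).1)) : G) ∈ Λ := Subtype.coe_prop _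
    rw [if_pos hmemx]
    exact natCast_zsmul _ _
  have hmem : ∀ f : Fin n → Fin s × Fin k, φ f ∈ nFold (dilSet k Λ) n := by
    intro f
    rw [hφ_def]
    apply sum_mem_nFold_s4
    intro i
    apply Finset.mem_image.mpr
    refine ⟨((f i).2.val + 1, ((e (idx i (f i).1)) : G)), ?_, rfl⟩
    apply Finset.mem_product.mpr
    constructor
    · exact Finset.mem_Icc.mpr ⟨by omega, Nat.succ_le_of_lt (f i).2.isLt⟩
    · exact Subtype.coe_prop _
  have hinj : Function.Injective φ := by
    intro f f' hff
    have hzero : ∑ x ∈ Λ, (cf f x - cf f' x) • x = 0 := by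
      have : ∀ x ∈ Λ, (cf f x - cf f' x) • x = cf f x • x - cf f' x • x := by
        intro x _; rw [sub_smul]
      rw [Finset.sum_congr rfl this, Finset.sum_sub_distrib, hsum f, hsum f', hff, sub_self]
    have hbdd : ∀ x ∈ Λ, |cf f x - cf f' x| ≤ (k : ℤ) := by
      intro x _
      rw [abs_le]
      constructor
      · have := hcf_le f' x
        have := hcf_nonneg f x
        omega
      · have := hcf_le f x
        have := hcf_nonneg f' x
        omega
    have hz := hdiss _ hbdd hzero
    funext i
    have hx : ((e (idx i (f i).1)) : G) ∈ Λ := Subtype.coe_prop _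
    have h0 := hz _ hx
    have h1 : cf f ((e (idx i (f i).1)) : G) = cf f' ((e (idx i (f i).1)) : G) := by omega
    rw [hcf_at f i] at h1
    by_cases hex : ∃ i' : Fin n, ((e (idx i' (f' i').1)) : G) = ((e (idx i (f i).1)) : G)
    · obtain ⟨i', hi'⟩ := hex
      have h2 : idx i' (f' i').1 = idx i (f i).1 := e.injective (Subtype.coe_injective hi')
      obtain ⟨hii, hrr⟩ := idx_inj _ _ _ _ h2
      rw [hii] at hi' hrr
      have h3 : cf f' ((e (idx i (f' i).1)) : G) = (((f' i).2.val + 1 : ℕ) : ℤ) := hcf_at f' i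
      rw [hi'] at h3
      rw [h3] at h1
      have h4 : (f i).2.val + 1 = (f' i).2.val + 1 := by exact_mod_cast h1
      have h5 : (f i).2 = (f' i).2 := Fin.ext (by omega)
      exact Prod.ext hrr.symm h5
    · exfalso
      have h6 : cf f' ((e (idx i (f i).1)) : G) = 0 := by
        rw [hcf_def]
        apply Finset.sum_eq_zero
        intro i' _
        rw [if_neg]
        intro hEq
        exact hex ⟨i', hEq⟩
      rw [h6] at h1
      have : (0 : ℤ) < (((f i).2.val + 1 : ℕ) : ℤ) := by positivity
      omega
  calc (d / n * k) ^ n = Fintype.card (Fin n → Fin s × Fin k) := by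
        rw [Fintype.card_fun]
        simp [hs, mul_comm]
    _ = (Finset.univ : Finset (Fin n → Fin s × Fin k)).card := (Finset.card_univ).symm
    _ ≤ (nFold (dilSet k Λ) n).card :=
        Finset.card_le_card_of_injOn φ (fun f _ => hmem f) (hinj.injOn)

end Aux

set_option maxHeartbeats 1000000 in
theorem stmt4 :
    ∃ c C : ℝ, 0 < c ∧ 0 < C ∧
      ∀ (G : Type u) [AddCommGroup G] [DecidableEq G] (A Z : Finset G) (k m : ℕ) (K : ℝ),
        A.Nonempty → Z.Nonempty → 1 ≤ k → 1 ≤ m → 1 ≤ K →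
        ((nFold (dilSet k A) m + Z).card : ℝ) ≤ K * Z.card →
        (m : ℝ) ≤ (addDim k A : ℝ) / 2 →
        (m : ℝ) ≤ c * Real.logb 2 Z.card →
        Real.logb 2 Z.card ≤ (addDim k A : ℝ) →
        (k : ℝ) * (addDim k A : ℝ) ≤ C * K ^ (1 / (m : ℝ)) * Real.logb 2 Z.card := by
  classical
  refine ⟨1/2, 128, by norm_num, by norm_num, ?_⟩
  intro G _ _ A Z k m K hA hZ hk hm hK hcard hm2 hmc hLd
  set d := addDim k A with hd
  have hdset : d ∈ {n : ℕ | ∃ Λ : Finset G, Λ ⊆ A ∧ Λ.card = n ∧ IsKDissociated k Λ} := by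
    rw [hd, addDim]
    apply Nat.sSup_mem
    · exact ⟨0, ∅, Finset.empty_subset _, Finset.card_empty, by
        intro ε h1 h2 x hx
        exact absurd hx (Finset.notMem_empty x)⟩
    · exact ⟨A.card, fun n ⟨Λ, hΛA, hΛc, _⟩ => hΛc ▸ Finset.card_le_card hΛA⟩
  obtain ⟨Λ, hΛA, hΛcard, hΛdiss⟩ := hdset
  set L := Real.logb 2 (Z.card : ℝ) with hL
  have hZ1 : (1 : ℝ) ≤ (Z.card : ℝ) := by exact_mod_cast Finset.card_pos.mpr hZ
  have hZpos : (0 : ℝ) < (Z.card : ℝ) := by linarith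
  have hZL : (Z.card : ℝ) = (2 : ℝ) ^ L := (Real.rpow_logb (by norm_num) (by norm_num) hZpos).symm
  have hm1 : (1 : ℝ) ≤ (m : ℝ) := by exact_mod_cast hm
  have hL2m : 2 * (m : ℝ) ≤ L := by
    have := hmc
    linarith
  have hLpos : 0 < L := by linarith
  have hd2m : 2 * (m : ℝ) ≤ (d : ℝ) := by linarith
  have hd2mNat : 2 * m ≤ d := by exact_mod_cast hd2m
  have hKpos : (0 : ℝ) < K := by linarith
  have hKm : (0 : ℝ) ≤ K ^ (1 / (m : ℝ)) := Real.rpow_nonneg (le_of_lt hKpos) _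
  -- The key inequality, for any admissible t
  have key : ∀ t : ℕ, 1 ≤ t → t * m ≤ d →
      (d : ℝ) * k ≤ 2 * (t * m : ℕ) * (K ^ (1 / (m : ℝ)) * (2 : ℝ) ^ (L / ((t * m : ℕ) : ℝ))) := by
    intro t ht htm
    set n := t * m with hn
    have hn1 : 1 ≤ n := le_trans hm (Nat.le_mul_of_pos_left m ht)
    have hn0 : 0 < n := hn1
    have hnR : (0 : ℝ) < (n : ℝ) := by exact_mod_cast hn0
    -- counting bound
    have hcount : ((d / n * k) ^ n : ℕ) ≤ (nFold (dilSet k A) n).card := by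
      refine le_trans ?_ (Finset.card_le_card (nFold_mono (dilSet_mono hΛA) n))
      have := counting k hk Λ hΛdiss n hn1 (by rw [hΛcard]; exact htm)
      rwa [hΛcard] at this
    -- Pluennecke bound
    have hplun : ((nFold (dilSet k A) n).card : ℝ) ≤ K ^ t * (Z.card : ℝ) := by
      set B := nFold (dilSet k A) m with hB
      have h1 := Finset.pluennecke_ruzsa_inequality_nsmul_add hZ B t
      have h2 : nFold (dilSet k A) n = t • B := by
        rw [hB, nFold_eq_nsmul, nFold_eq_nsmul, hn, mul_comm t m, mul_nsmul]
      rw [h2]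
      have h3 : (((t • B).card : ℚ≥0) : ℝ) ≤
          ((((Z + B).card : ℚ≥0) / (Z.card : ℚ≥0)) ^ t * (Z.card : ℚ≥0) : ℚ≥0) := by
        exact_mod_cast h1
      push_cast at h3
      have hQK : ((Z + B).card : ℝ) / (Z.card : ℝ) ≤ K := by
        rw [div_le_iff₀ hZpos]
        rw [add_comm Z B]
        exact hcard
      have hQ0 : (0 : ℝ) ≤ ((Z + B).card : ℝ) / (Z.card : ℝ) := div_nonneg (Nat.cast_nonneg _) (Nat.cast_nonneg _)
      calc ((t • B).card : ℝ) ≤ (((Z + B).card : ℝ) / (Z.card : ℝ)) ^ t * (Z.card : ℝ) := h3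
        _ ≤ K ^ t * (Z.card : ℝ) := by
            apply mul_le_mul_of_nonneg_right _ (le_of_lt hZpos)
            exact pow_le_pow_left₀ hQ0 hQK t
    -- floor bound : d / (2n) ≤ d/n (nat division)
    have hq1 : 1 ≤ d / n := (Nat.one_le_div_iff hn0).mpr htm
    have hdlt : d < (d / n + 1) * n := by
      have := Nat.lt_succ_self (d / n)
      exact (Nat.div_lt_iff_lt_mul hn0).mp this
    have hd2n : (d : ℝ) ≤ 2 * ((d / n : ℕ) : ℝ) * (n : ℝ) := by
      have h4 : (d / n + 1) * n ≤ (d / n + d / n) * n := by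
        apply Nat.mul_le_mul_right
        omega
      have h5 : d < 2 * (d / n) * n := by
        calc d < (d / n + 1) * n := hdlt
          _ ≤ (d / n + d / n) * n := h4
          _ = 2 * (d / n) * n := by ring
      exact_mod_cast le_of_lt h5
    -- combine: ((d:ℝ)*k/(2n))^n ≤ K^t * 2^L
    have hbase0 : (0 : ℝ) ≤ (d : ℝ) * k / (2 * n) := by positivity
    have hbase : (d : ℝ) * k / (2 * (n : ℝ)) ≤ ((d / n : ℕ) : ℝ) * k := by
      rw [div_le_iff₀ (by positivity)]
      have hk0 : (0 : ℝ) ≤ (k : ℝ) := by positivity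
      calc (d : ℝ) * k ≤ (2 * ((d / n : ℕ) : ℝ) * (n : ℝ)) * k := by
            apply mul_le_mul_of_nonneg_right hd2n hk0
        _ = ((d / n : ℕ) : ℝ) * k * (2 * n) := by ring
    have hpow : ((d : ℝ) * k / (2 * (n : ℝ))) ^ n ≤ K ^ t * (2 : ℝ) ^ L := by
      calc ((d : ℝ) * k / (2 * (n : ℝ))) ^ n ≤ (((d / n : ℕ) : ℝ) * k) ^ n :=
            pow_le_pow_left₀ hbase0 hbase n
        _ = (((d / n * k) ^ n : ℕ) : ℝ) := by push_cast; ring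
        _ ≤ ((nFold (dilSet k A) n).card : ℝ) := by exact_mod_cast hcount
        _ ≤ K ^ t * (Z.card : ℝ) := hplun
        _ = K ^ t * (2 : ℝ) ^ L := by rw [hZL]
    -- extract n-th root
    have hrhs0 : (0 : ℝ) ≤ K ^ t * (2 : ℝ) ^ L := by positivity
    have hroot : (d : ℝ) * k / (2 * (n : ℝ)) ≤ (K ^ t * (2 : ℝ) ^ L) ^ (1 / (n : ℝ)) := by
      have h6 : (((d : ℝ) * k / (2 * (n : ℝ))) ^ n) ^ (1 / (n : ℝ)) ≤
          (K ^ t * (2 : ℝ) ^ L) ^ (1 / (n : ℝ)) :=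
        Real.rpow_le_rpow (by positivity) hpow (by positivity)
      rwa [← Real.rpow_natCast ((d : ℝ) * k / (2 * (n : ℝ))) n, ← Real.rpow_mul hbase0,
        mul_one_div, div_self (ne_of_gt hnR), Real.rpow_one] at h6
    have hsplit : (K ^ t * (2 : ℝ) ^ L) ^ (1 / (n : ℝ)) =
        K ^ (1 / (m : ℝ)) * (2 : ℝ) ^ (L / (n : ℝ)) := by
      rw [Real.mul_rpow (by positivity) (by positivity)]
      congr 1
      · rw [← Real.rpow_natCast K t, ← Real.rpow_mul (le_of_lt hKpos), mul_one_div]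
        congr 1
        rw [hn]
        push_cast
        rw [div_eq_div_iff (by positivity) (by positivity)]
        have htR : (0 : ℝ) < (t : ℝ) := by exact_mod_cast ht
        ring
      · rw [← Real.rpow_mul (by norm_num : (0:ℝ) ≤ 2), mul_one_div]
    rw [hsplit] at hroot
    calc (d : ℝ) * k = (2 * (n : ℝ)) * ((d : ℝ) * k / (2 * (n : ℝ))) := by
          field_simp
      _ ≤ (2 * (n : ℝ)) * (K ^ (1 / (m : ℝ)) * (2 : ℝ) ^ (L / (n : ℝ))) := by
          apply mul_le_mul_of_nonneg_left hroot (by positivity)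
      _ = 2 * ((n : ℕ) : ℝ) * (K ^ (1 / (m : ℝ)) * (2 : ℝ) ^ (L / ((n : ℕ) : ℝ))) := by rfl
  -- now case split
  by_cases hcase : (d : ℝ) ≤ 8 * L
  · -- t = d / (2*m)
    set t := d / (2 * m) with ht
    have h2m0 : 0 < 2 * m := by omega
    have ht1 : 1 ≤ t := (Nat.one_le_div_iff h2m0).mpr hd2mNat
    have htm : t * m ≤ d := by
      have h1 : t * (2 * m) ≤ d := Nat.div_mul_le_self d (2 * m)
      have h2 : t * m ≤ t * (2 * m) := Nat.mul_le_mul_left t (by omega)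
      omega
    have hkey := key t ht1 htm
    set n := t * m with hn
    have hn2d : 2 * (n : ℝ) ≤ (d : ℝ) := by
      have : 2 * n ≤ d := by
        have h1 : t * (2 * m) ≤ d := Nat.div_mul_le_self d (2 * m)
        have : 2 * (t * m) = t * (2 * m) := by ring
        omega
      exact_mod_cast this
    have hdlt4n : (d : ℝ) < 4 * (n : ℝ) := by
      have h1 : d < (t + 1) * (2 * m) := by
        have := Nat.lt_succ_self t
        exact (Nat.div_lt_iff_lt_mul h2m0).mp this
      have h2 : (t + 1) * (2 * m) ≤ (t + t) * (2 * m) := by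
        apply Nat.mul_le_mul_right
        omega
      have h3 : d < 4 * n := by
        have h4 : (t + t) * (2 * m) = 4 * (t * m) := by ring
        omega
      exact_mod_cast h3
    have hnRpos : (0 : ℝ) < (n : ℝ) := by
      have : 0 < n := by
        have := Nat.mul_le_mul ht1 hm
        omega
      exact_mod_cast this
    have hLn4 : L / (n : ℝ) ≤ 4 := by
      rw [div_le_iff₀ hnRpos]
      calc L ≤ (d : ℝ) := hLd
        _ ≤ 4 * n := le_of_lt hdlt4n
    have h2Ln : (2 : ℝ) ^ (L / (n : ℝ)) ≤ 16 := by
      calc (2 : ℝ) ^ (L / (n : ℝ)) ≤ (2 : ℝ) ^ (4 : ℝ) :=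
            Real.rpow_le_rpow_of_exponent_le (by norm_num) hLn4
        _ = 16 := by
            rw [show (4 : ℝ) = ((4 : ℕ) : ℝ) by norm_num, Real.rpow_natCast]
            norm_num
    calc (k : ℝ) * d = (d : ℝ) * k := by ring
      _ ≤ 2 * (n : ℝ) * (K ^ (1 / (m : ℝ)) * (2 : ℝ) ^ (L / (n : ℝ))) := hkey
      _ ≤ (d : ℝ) * (K ^ (1 / (m : ℝ)) * 16) := by
          apply mul_le_mul hn2d _ (by positivity) (by positivity)
          exact mul_le_mul_of_nonneg_left h2Ln hKm
      _ ≤ (8 * L) * (K ^ (1 / (m : ℝ)) * 16) := by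
          apply mul_le_mul_of_nonneg_right hcase (by positivity)
      _ = 128 * K ^ (1 / (m : ℝ)) * L := by ring
  · -- t = ⌊L / m⌋
    push_neg at hcase
    set t := ⌊L / (m : ℝ)⌋₊ with ht
    have hmRpos : (0 : ℝ) < (m : ℝ) := by linarith
    have hLm2 : (2 : ℝ) ≤ L / (m : ℝ) := by
      rw [le_div_iff₀ hmRpos]
      linarith
    have ht1 : 1 ≤ t := by
      rw [ht]
      apply Nat.le_floor
      push_cast
      linarith
    have htLm : ((t : ℝ)) ≤ L / (m : ℝ) := Nat.floor_le (by positivity)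
    have htmL : ((t * m : ℕ) : ℝ) ≤ L := by
      push_cast
      calc (t : ℝ) * m ≤ (L / m) * m := by
            apply mul_le_mul_of_nonneg_right htLm (by positivity)
        _ = L := by field_simp
    have htm : t * m ≤ d := by
      have : ((t * m : ℕ) : ℝ) ≤ (d : ℝ) := le_trans htmL hLd
      exact_mod_cast this
    have hkey := key t ht1 htm
    set n := t * m with hn
    have hnL2 : L / 2 ≤ (n : ℝ) := by
      have h1 : L / (m : ℝ) < t + 1 := Nat.lt_floor_add_one _
      have h2 : L - m < (t : ℝ) * m := by
        have := mul_lt_mul_of_pos_right h1 hmRpos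
        rw [div_mul_cancel₀ _ (ne_of_gt hmRpos)] at this
        nlinarith
      have h3 : (m : ℝ) ≤ L / 2 := by linarith
      have h4 : ((n : ℕ) : ℝ) = (t : ℝ) * m := by rw [hn]; push_cast; ring
      linarith
    have hnRpos : (0 : ℝ) < (n : ℝ) := by linarith
    have hLn2 : L / (n : ℝ) ≤ 2 := by
      rw [div_le_iff₀ hnRpos]
      linarith
    have h2Ln : (2 : ℝ) ^ (L / (n : ℝ)) ≤ 4 := by
      have e1 : ((2 : ℕ) : ℝ) = (2 : ℝ) := by norm_num
      calc (2 : ℝ) ^ (L / (n : ℝ)) ≤ (2 : ℝ) ^ (((2 : ℕ) : ℝ)) :=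
            Real.rpow_le_rpow_of_exponent_le (by norm_num) (by rw [e1]; exact hLn2)
        _ = (2 : ℝ) ^ (2 : ℕ) := Real.rpow_natCast 2 2
        _ = 4 := by norm_num
    calc (k : ℝ) * d = (d : ℝ) * k := by ring
      _ ≤ 2 * (n : ℝ) * (K ^ (1 / (m : ℝ)) * (2 : ℝ) ^ (L / (n : ℝ))) := hkey
      _ ≤ 2 * L * (K ^ (1 / (m : ℝ)) * 4) := by
          apply mul_le_mul _ _ (by positivity) (by positivity)
          · linarith
          · exact mul_le_mul_of_nonneg_left h2Ln hKm
      _ = 8 * K ^ (1 / (m : ℝ)) * L := by ring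
      _ ≤ 128 * K ^ (1 / (m : ℝ)) * L := by
          have hKm1 : (1 : ℝ) ≤ K ^ (1 / (m : ℝ)) :=
            Real.one_le_rpow hK (by positivity)
          nlinarith
end
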